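/- arXiv:1603.03790 — 2 statements merged into one kernel-verified Lean document; each statement's English description precedes it below -/
import Mathlib

section
/- Let E ⊆ ℝ² be a bounded domain with Fraenkel asymmetry A(E). Then for every measurable U ⊆ E with |U| ≥ |E|(1 − A(E)/4), one has A(U) ≥ A(E)/4. -/
open MeasureTheory

/-- The Fraenkel asymmetry of a bounded set `E ⊆ ℝ²` of positive measure:
`A(E) = inf{ |E △ (x₀ + rB)|/|E| : x₀ ∈ ℝ², πr² = |E| }`. -/
noncomputable def fraenkel (E : Set (EuclideanSpace ℝ (Fin 2))) : ℝ :=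
  sInf { r : ℝ | ∃ (x₀ : EuclideanSpace ℝ (Fin 2)) (rad : ℝ), 0 ≤ rad ∧
    Real.pi * rad ^ 2 = (volume E).toReal ∧
    r = (volume (symmDiff E (Metric.ball x₀ rad))).toReal / (volume E).toReal }


lemma ball_vol (x : EuclideanSpace ℝ (Fin 2)) {r : ℝ} (hr : 0 ≤ r) :
    volume (Metric.ball x r) = ENNReal.ofReal (Real.pi * r ^ 2) := by
  rw [EuclideanSpace.volume_ball]
  simp only [Fintype.card_fin]
  rw [show ((2:ℕ) / 2 + 1 : ℝ) = 2 by norm_num, Real.Gamma_two,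
    Real.sq_sqrt Real.pi_nonneg, div_one, ← ENNReal.ofReal_pow hr,
    ← ENNReal.ofReal_mul (by positivity), mul_comm]

lemma symmDiff_subset_union {α : Type*} (s t : Set α) : symmDiff s t ⊆ s ∪ t := by
  rw [Set.symmDiff_def]
  exact Set.union_subset (Set.diff_subset.trans Set.subset_union_left)
    (Set.diff_subset.trans Set.subset_union_right)

/-- If `U ⊆ E` with `|U| ≥ |E|(1 − A(E)/4)`, then `A(U) ≥ A(E)/4`. -/
theorem stmt9 (E U : Set (EuclideanSpace ℝ (Fin 2)))
    (hEmeas : MeasurableSet E) (hEbdd : Bornology.IsBounded E) (hEpos : 0 < volume E)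
    (hU : MeasurableSet U) (hUE : U ⊆ E)
    (hvol : (volume E).toReal * (1 - fraenkel E / 4) ≤ (volume U).toReal) :
    fraenkel E / 4 ≤ fraenkel U := by
  have haT : volume E ≠ ⊤ := hEbdd.measure_lt_top.ne
  have huT : volume U ≠ ⊤ := ((measure_mono hUE).trans_lt hEbdd.measure_lt_top).ne
  set aR := (volume E).toReal with haR
  set uR := (volume U).toReal with huR
  have haRpos : 0 < aR := ENNReal.toReal_pos hEpos.ne' haT
  have huRle : uR ≤ aR := ENNReal.toReal_mono haT (measure_mono hUE)
  have hbddE : BddBelow { r : ℝ | ∃ (x₀ : EuclideanSpace ℝ (Fin 2)) (rad : ℝ), 0 ≤ rad ∧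
      Real.pi * rad ^ 2 = (volume E).toReal ∧
      r = (volume (symmDiff E (Metric.ball x₀ rad))).toReal / (volume E).toReal } := by
    refine ⟨0, ?_⟩
    rintro r ⟨x, rad, _, _, rfl⟩
    positivity
  have hA0 : 0 ≤ fraenkel E := by
    apply Real.sInf_nonneg
    rintro r ⟨x, rad, _, _, rfl⟩
    positivity
  set rad' : ℝ := Real.sqrt (aR / Real.pi) with hrad'def
  have hrad' : 0 ≤ rad' := Real.sqrt_nonneg _
  have hπ' : Real.pi * rad' ^ 2 = aR := by
    rw [hrad'def, Real.sq_sqrt (by positivity), mul_div_cancel₀ _ Real.pi_ne_zero]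
  have hA2 : fraenkel E ≤ 2 := by
    have hmem : (volume (symmDiff E (Metric.ball 0 rad'))).toReal / aR ∈
        { r : ℝ | ∃ (x₀ : EuclideanSpace ℝ (Fin 2)) (rad : ℝ), 0 ≤ rad ∧
          Real.pi * rad ^ 2 = (volume E).toReal ∧
          r = (volume (symmDiff E (Metric.ball x₀ rad))).toReal / (volume E).toReal } :=
      ⟨0, rad', hrad', hπ', rfl⟩
    refine (csInf_le hbddE hmem).trans ?_
    have h1 : volume (symmDiff E (Metric.ball 0 rad')) ≤
        volume E + volume (Metric.ball (0 : EuclideanSpace ℝ (Fin 2)) rad') :=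
      (measure_mono (symmDiff_subset_union _ _)).trans (measure_union_le _ _)
    have h2 : (volume (symmDiff E (Metric.ball 0 rad'))).toReal ≤ aR + aR := by
      refine (ENNReal.toReal_mono ?_ h1).trans ?_
      · rw [ball_vol _ hrad']
        finiteness
      · rw [ENNReal.toReal_add haT (by rw [ball_vol _ hrad']; exact ENNReal.ofReal_ne_top),
          ball_vol _ hrad', hπ', ENNReal.toReal_ofReal haRpos.le]
    rw [div_le_iff₀ haRpos]
    linarith
  have huRpos : 0 < uR := by nlinarith
  refine le_csInf ⟨(volume (symmDiff U (Metric.ball 0 (Real.sqrt (uR / Real.pi))))).toReal / uR,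
    0, Real.sqrt (uR / Real.pi), Real.sqrt_nonneg _, by
      rw [Real.sq_sqrt (by positivity), mul_div_cancel₀ _ Real.pi_ne_zero], rfl⟩ ?_
  rintro r ⟨x₀, rad, hrad, hπu, rfl⟩
  set B : Set (EuclideanSpace ℝ (Fin 2)) := Metric.ball x₀ rad with hB
  set B' : Set (EuclideanSpace ℝ (Fin 2)) := Metric.ball x₀ rad' with hB'
  rw [← huR] at hπu
  have hradle : rad ≤ rad' := by
    by_contra h
    push_neg at h
    have h2 := pow_lt_pow_left₀ h hrad' two_ne_zero
    nlinarith [Real.pi_pos]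
  have hBB' : B ⊆ B' := Metric.ball_subset_ball hradle
  have hsub : symmDiff E B' ⊆ ((E \ U) ∪ symmDiff U B) ∪ (B' \ B) := by
    have t1 : symmDiff E B' ≤ symmDiff E B ⊔ symmDiff B B' := symmDiff_triangle E B B'
    have t2 : symmDiff E B ≤ symmDiff E U ⊔ symmDiff U B := symmDiff_triangle E U B
    have e1 : symmDiff E U = E \ U := symmDiff_of_ge hUE
    have e2 : symmDiff B B' = B' \ B := symmDiff_of_le hBB'
    rw [e1] at t2
    rw [e2] at t1
    calc symmDiff E B' ⊆ symmDiff E B ∪ (B' \ B) := t1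
      _ ⊆ ((E \ U) ∪ symmDiff U B) ∪ (B' \ B) := Set.union_subset_union_left _ t2
  -- finiteness facts
  have hvB : volume B = ENNReal.ofReal (Real.pi * rad ^ 2) := ball_vol _ hrad
  have hvB' : volume B' = ENNReal.ofReal (Real.pi * rad' ^ 2) := ball_vol _ hrad'
  have hdEU : (volume (E \ U)).toReal = aR - uR := by
    rw [measure_diff hUE hU.nullMeasurableSet huT,
      ENNReal.toReal_sub_of_le (measure_mono hUE) haT]
  have hdBB : (volume (B' \ B)).toReal = aR - uR := by
    rw [measure_diff hBB' measurableSet_ball.nullMeasurableSet (by rw [hvB]; finiteness),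
      hvB, hvB', hπ', hπu, ← ENNReal.ofReal_sub _ huRpos.le,
      ENNReal.toReal_ofReal (by linarith)]
  have hfin1 : volume (E \ U) ≠ ⊤ := ((measure_mono Set.diff_subset).trans_lt
    hEbdd.measure_lt_top).ne
  have hfin2 : volume (symmDiff U B) ≠ ⊤ := by
    refine (((measure_mono (symmDiff_subset_union U B)).trans (measure_union_le _ _)).trans_lt
      ?_).ne
    rw [hvB]
    exact ENNReal.add_lt_top.mpr ⟨huT.lt_top, ENNReal.ofReal_lt_top⟩
  have hfin3 : volume (B' \ B) ≠ ⊤ := ((measure_mono Set.diff_subset).trans_lt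
    (by rw [hvB']; exact ENNReal.ofReal_lt_top)).ne
  set sU := (volume (symmDiff U B)).toReal with hsU
  have hkey : (volume (symmDiff E B')).toReal ≤ (aR - uR) + sU + (aR - uR) := by
    have hch : volume (symmDiff E B') ≤ volume (E \ U) + volume (symmDiff U B)
        + volume (B' \ B) :=
      (measure_mono hsub).trans ((measure_union_le _ _).trans
        (add_le_add_left (measure_union_le _ _) _))
    refine (ENNReal.toReal_mono (by finiteness) hch).trans_eq ?_
    rw [ENNReal.toReal_add (by finiteness) hfin3, ENNReal.toReal_add hfin1 hfin2, hdEU, hdBB]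
  have hAle : fraenkel E ≤ (volume (symmDiff E B')).toReal / aR :=
    csInf_le hbddE ⟨x₀, rad', hrad', hπ', rfl⟩
  have hAle2 : fraenkel E * aR ≤ (volume (symmDiff E B')).toReal := by
    rw [← le_div_iff₀ haRpos]
    exact hAle
  have hsU0 : 0 ≤ sU := ENNReal.toReal_nonneg
  have hgap : aR - uR ≤ aR * (fraenkel E / 4) := by nlinarith
  have hr0 : 0 ≤ sU / uR := by positivity
  rw [div_le_div_iff₀ (by norm_num) huRpos] at *
  nlinarith [mul_le_mul_of_nonneg_left huRle hr0]
end

section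
/- Let Ω ⊆ ℝ² be a bounded domain and B_Ω a disk with |B_Ω| = |Ω| and |B_Ω \ Ω| < |B_Ω|/2. Then M₂[χ_{B_Ω}] ≤ 4·M₂[χ_Ω] + (16/π)|Ω|², and consequently M₂[χ_{B_Ω}] ≤ 36·M₂[χ_Ω]. -/
open MeasureTheory Metric Set

local notation "E2" => EuclideanSpace ℝ (Fin 2)

lemma vol_ball2 (c : E2) (r : ℝ) (hr : 0 ≤ r) :
    volume (Metric.ball c r) = ENNReal.ofReal (Real.pi * r ^ 2) := by
  rw [EuclideanSpace.volume_ball]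
  simp only [Fintype.card_fin]
  rw [show ((2:ℕ)/2 + 1 : ℝ) = 2 by norm_num, Real.Gamma_two,
    Real.sq_sqrt Real.pi_pos.le, ← ENNReal.ofReal_pow hr, ← ENNReal.ofReal_mul (by positivity)]
  ring_nf

lemma ball_moment (r : ℝ) (hr : 0 ≤ r) :
    ∫ x in Metric.ball (0:E2) r, ‖x‖ ^ 2 = Real.pi * r ^ 4 / 2 := by
  have h := integral_fun_norm_addHaar (volume : Measure E2)
      (fun y => if y < r then y ^ 2 else (0:ℝ))
  have hL : (∫ x : E2, (if ‖x‖ < r then ‖x‖ ^ 2 else 0)) =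
      ∫ x in Metric.ball (0:E2) r, ‖x‖ ^ 2 := by
    rw [← integral_indicator measurableSet_ball]
    congr 1
    ext x
    simp [Set.indicator, mem_ball_zero_iff]
  have hR : (∫ y in Set.Ioi (0:ℝ), y ^ (Module.finrank ℝ E2 - 1) •
      (if y < r then y ^ 2 else (0:ℝ))) = r ^ 4 / 4 := by
    have hdim : Module.finrank ℝ E2 = 2 := by simp [finrank_euclideanSpace]
    rw [hdim]
    have : ∀ y : ℝ, y ^ (2 - 1) • (if y < r then y ^ 2 else (0:ℝ)) =
        (Set.Iio r).indicator (fun y => y ^ 3) y := by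
      intro y
      simp [Set.indicator, Set.mem_Iio, smul_eq_mul]
      split <;> ring
    simp_rw [this]
    rw [setIntegral_indicator measurableSet_Iio, Set.Ioi_inter_Iio,
      ← integral_Ioc_eq_integral_Ioo, ← intervalIntegral.integral_of_le hr,
      integral_pow]
    norm_num
  rw [hL] at h
  rw [h, hR]
  have hu : volume (Metric.ball (0:E2) 1) = ENNReal.ofReal Real.pi := by
    rw [vol_ball2 _ _ zero_le_one]; norm_num
  rw [measureReal_def, hu, ENNReal.toReal_ofReal Real.pi_pos.le]
  have hdim : Module.finrank ℝ E2 = 2 := by simp [finrank_euclideanSpace]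
  rw [hdim, smul_eq_mul, nsmul_eq_mul]
  push_cast
  ring


/-- If `B_Ω` is a disk with `|B_Ω| = |Ω|` and `|B_Ω \ Ω| < |B_Ω|/2`, then
`M₂[χ_{B_Ω}] ≤ 4·M₂[χ_Ω] + (16/π)|Ω|²`, and consequently `M₂[χ_{B_Ω}] ≤ 36·M₂[χ_Ω]`. -/
theorem stmt11 (Ω : Set (EuclideanSpace ℝ (Fin 2)))
    (hmeas : MeasurableSet Ω) (hbdd : Bornology.IsBounded Ω)
    (c : EuclideanSpace ℝ (Fin 2)) (r : ℝ) (hr : 0 ≤ r)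
    (hvol : volume (Metric.ball c r) = volume Ω)
    (hhalf : volume (Metric.ball c r \ Ω) < volume (Metric.ball c r) / 2) :
    (∫ x in Metric.ball c r, ‖x‖ ^ 2) ≤
        4 * (∫ x in Ω, ‖x‖ ^ 2) + (16 / Real.pi) * (volume Ω).toReal ^ 2 ∧
    (∫ x in Metric.ball c r, ‖x‖ ^ 2) ≤ 36 * ∫ x in Ω, ‖x‖ ^ 2 := by
  have hπ := Real.pi_pos
  set B := Metric.ball c r with hB
  -- volume facts
  have hvB : volume B = ENNReal.ofReal (Real.pi * r ^ 2) := vol_ball2 c r hr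
  have hrpos : 0 < r := by
    by_contra h
    push_neg at h
    have hBe : B = ∅ := Metric.ball_eq_empty.mpr h
    rw [hBe] at hhalf
    simp at hhalf
  have hvΩ : (volume Ω).toReal = Real.pi * r ^ 2 := by
    rw [← hvol, hvB, ENNReal.toReal_ofReal (by positivity)]
  -- integrability
  have hint : ∀ s : Set E2, Bornology.IsBounded s →
      IntegrableOn (fun x : E2 => ‖x‖ ^ 2) s := fun s hs =>
    (((continuous_norm.pow 2).continuousOn).integrableOn_compact
      hs.isCompact_closure).mono_set subset_closure
  have intΩ := hint Ω hbdd
  have intB := hint B isBounded_ball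
  have intBΩ : IntegrableOn (fun x : E2 => ‖x‖ ^ 2) (B ∩ Ω) :=
    intB.mono_set inter_subset_left
  -- measure arithmetic
  have hfinB : volume B ≠ ⊤ := by rw [hvB]; exact ENNReal.ofReal_ne_top
  have hsum : volume (B ∩ Ω) + volume (B \ Ω) = volume B := measure_inter_add_diff B hmeas
  set a := (volume (B ∩ Ω)).toReal with ha
  set vb := (volume B).toReal with hvb
  have hvb' : vb = Real.pi * r ^ 2 := by rw [hvb, hvB, ENNReal.toReal_ofReal (by positivity)]
  have hfinBΩ : volume (B ∩ Ω) ≠ ⊤ := (measure_mono inter_subset_left).trans_lt hfinB.lt_top |>.ne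
  have hfind : volume (B \ Ω) ≠ ⊤ := (measure_mono diff_subset).trans_lt hfinB.lt_top |>.ne
  have hsumR : a + (volume (B \ Ω)).toReal = vb := by
    rw [ha, hvb, ← ENNReal.toReal_add hfinBΩ hfind, hsum]
  have hdR : (volume (B \ Ω)).toReal < vb / 2 := by
    have := ENNReal.toReal_lt_toReal hfind (ENNReal.div_lt_top hfinB two_ne_zero).ne |>.mpr hhalf
    simpa [ENNReal.toReal_div] using this
  have hab : vb ≤ 2 * a := by linarith
  have hapos : 0 < a := by
    have : 0 < vb := by rw [hvb']; positivity
    linarith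
  -- Step A : pointwise then averaged bound
  set I := ∫ x in B, ‖x‖ ^ 2 with hI
  set M := ∫ x in B ∩ Ω, ‖x‖ ^ 2 with hM
  have hMnn : 0 ≤ M := setIntegral_nonneg (measurableSet_ball.inter hmeas)
    fun x _ => by positivity
  have hptw : ∀ y ∈ B ∩ Ω, I ≤ vb * (2 * ‖y‖ ^ 2 + 8 * r ^ 2) := by
    intro y hy
    have h1 : I ≤ ∫ _x in B, (2 * ‖y‖ ^ 2 + 8 * r ^ 2) := by
      refine setIntegral_mono_on intB (integrableOn_const hfinB)
        measurableSet_ball ?_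
      intro x hx
      have hxy : ‖x - y‖ ≤ 2 * r := by
        have h1 : dist x c < r := mem_ball.mp hx
        have h2 : dist y c < r := mem_ball.mp hy.1
        calc ‖x - y‖ = dist x y := (dist_eq_norm x y).symm
        _ ≤ dist x c + dist c y := dist_triangle x c y
        _ ≤ 2 * r := by rw [dist_comm c y]; linarith
      have hx' : ‖x‖ ≤ ‖y‖ + 2 * r :=
        (norm_le_norm_add_norm_sub' x y).trans (by linarith [hxy])
      nlinarith [pow_le_pow_left₀ (norm_nonneg x) hx' 2, sq_nonneg (‖y‖ - 2 * r),
        norm_nonneg y, hrpos.le]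
    rwa [setIntegral_const, smul_eq_mul] at h1
  have havg : a * I ≤ vb * (2 * M + 8 * r ^ 2 * a) := by
    have h2 : ∫ _y in B ∩ Ω, I ≤ ∫ y in B ∩ Ω, vb * (2 * ‖y‖ ^ 2 + 8 * r ^ 2) := by
      refine setIntegral_mono_on (integrableOn_const hfinBΩ)
        ((((intBΩ.const_mul 2).add (integrableOn_const
          hfinBΩ)).const_mul vb)) (measurableSet_ball.inter hmeas) hptw
    rw [setIntegral_const, smul_eq_mul] at h2
    calc a * I ≤ ∫ y in B ∩ Ω, vb * (2 * ‖y‖ ^ 2 + 8 * r ^ 2) := h2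
    _ = vb * (2 * M + 8 * r ^ 2 * a) := by
        rw [integral_const_mul]
        congr 1
        rw [integral_add (intBΩ.const_mul 2) (integrableOn_const hfinBΩ),
          integral_const_mul, setIntegral_const, smul_eq_mul, hM, ha, measureReal_def]
        ring
  have hstepA : I ≤ 4 * M + 8 * r ^ 2 * vb := by nlinarith
  have hMΩ : M ≤ ∫ x in Ω, ‖x‖ ^ 2 :=
    setIntegral_mono_set intΩ (Filter.Eventually.of_forall fun x => by positivity)
      (HasSubset.Subset.eventuallyLE inter_subset_right)
  -- Step B : bathtub
  set B0 := Metric.ball (0 : E2) r with hB0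
  have hvB0 : volume B0 = volume Ω := by
    rw [← hvol, hB0, hB, vol_ball2 0 r hr, vol_ball2 c r hr]
  have intB0 := hint B0 isBounded_ball
  have hd2 : (volume (Ω \ B0)).toReal = (volume (B0 \ Ω)).toReal := by
    have h1 : volume (Ω ∩ B0) + volume (Ω \ B0) = volume Ω := measure_inter_add_diff Ω measurableSet_ball
    have h2 : volume (B0 ∩ Ω) + volume (B0 \ Ω) = volume B0 := measure_inter_add_diff B0 hmeas
    have hfΩ : volume Ω ≠ ⊤ := by rw [← hvol, hvB]; exact ENNReal.ofReal_ne_top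
    have hfB0 : volume B0 ≠ ⊤ := by rw [hvB0]; exact hfΩ
    have hinter : volume (Ω ∩ B0) = volume (B0 ∩ Ω) := by rw [inter_comm]
    have e1 : volume (Ω \ B0) = volume (B0 \ Ω) := by
      have hfi : volume (B0 ∩ Ω) ≠ ⊤ := (measure_mono inter_subset_right).trans_lt hfΩ.lt_top |>.ne
      rw [hvB0] at h2
      rw [hinter] at h1
      exact (ENNReal.add_right_inj hfi).mp (h1.trans h2.symm)
    rw [e1]
  have hbathtub : (∫ x in B0, ‖x‖ ^ 2) ≤ ∫ x in Ω, ‖x‖ ^ 2 := by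
    have eΩ : (∫ x in Ω ∩ B0, ‖x‖ ^ 2) + (∫ x in Ω \ B0, ‖x‖ ^ 2) = ∫ x in Ω, ‖x‖ ^ 2 :=
      integral_inter_add_diff measurableSet_ball intΩ
    have eB0 : (∫ x in B0 ∩ Ω, ‖x‖ ^ 2) + (∫ x in B0 \ Ω, ‖x‖ ^ 2) = ∫ x in B0, ‖x‖ ^ 2 :=
      integral_inter_add_diff hmeas intB0
    have h3 : (∫ x in B0 \ Ω, ‖x‖ ^ 2) ≤ r ^ 2 * (volume (B0 \ Ω)).toReal := by
      have hmono : (∫ x in B0 \ Ω, ‖x‖ ^ 2) ≤ ∫ _x in B0 \ Ω, r ^ 2 :=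
        setIntegral_mono_on (intB0.mono_set diff_subset)
          (integrableOn_const ((measure_mono diff_subset).trans_lt
            (by rw [hvB0, ← hvol, hvB]; exact ENNReal.ofReal_lt_top)).ne)
          (measurableSet_ball.diff hmeas)
          (fun x hx => by
            have hxr : ‖x‖ < r := mem_ball_zero_iff.mp hx.1
            nlinarith [norm_nonneg x])
      rwa [setIntegral_const, smul_eq_mul, mul_comm] at hmono
    have h4 : r ^ 2 * (volume (Ω \ B0)).toReal ≤ ∫ x in Ω \ B0, ‖x‖ ^ 2 := by
      have hmono : (∫ _x in Ω \ B0, r ^ 2) ≤ ∫ x in Ω \ B0, ‖x‖ ^ 2 :=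
        setIntegral_mono_on
          (integrableOn_const ((measure_mono diff_subset).trans_lt
            (by rw [← hvol, hvB]; exact ENNReal.ofReal_lt_top)).ne)
          (intΩ.mono_set diff_subset)
          (hmeas.diff measurableSet_ball)
          (fun x hx => by
            have hxr : r ≤ ‖x‖ := by
              by_contra h
              exact hx.2 (mem_ball_zero_iff.mpr (lt_of_not_ge h))
            nlinarith [hrpos.le])
      rwa [setIntegral_const, smul_eq_mul, mul_comm] at hmono
    have h5 : (∫ x in Ω ∩ B0, ‖x‖ ^ 2) = ∫ x in B0 ∩ Ω, ‖x‖ ^ 2 := by rw [inter_comm]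
    rw [hd2] at h4
    linarith
  have hB0val : (∫ x in B0, ‖x‖ ^ 2) = Real.pi * r ^ 4 / 2 := ball_moment r hr
  -- conclude
  have hIΩ : I ≤ 4 * (∫ x in Ω, ‖x‖ ^ 2) + 8 * Real.pi * r ^ 4 := by
    rw [hvb'] at hstepA
    have e1 : 8 * r ^ 2 * (Real.pi * r ^ 2) = 8 * Real.pi * r ^ 4 := by ring
    rw [e1] at hstepA
    linarith
  have hJnn : 0 ≤ ∫ x in Ω, ‖x‖ ^ 2 :=
    setIntegral_nonneg hmeas fun x _ => by positivity
  have hpr : (0:ℝ) ≤ Real.pi * r ^ 4 := by positivity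
  constructor
  · rw [hvΩ]
    have e2 : (16 / Real.pi) * (Real.pi * r ^ 2) ^ 2 = 16 * Real.pi * r ^ 4 := by
      field_simp
    rw [e2]
    linarith
  · have h6 : Real.pi * r ^ 4 / 2 ≤ ∫ x in Ω, ‖x‖ ^ 2 := hB0val ▸ hbathtub
    linarith
end
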